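/- Let $V$ be a reflexive Banach space and $G : V \to \overline{\mathbb{R}}$ convex. Suppose $G_k : V_k \times V \to \overline{\mathbb{R}}$ and $R_k^* : V_k \to V$ are such that $G(v + R_k^* w_k) \le G_k(w_k, v)$ for all $v \in \mathrm{dom}\, G$, $w_k \in V_k$ (local stability), and for $\tau \in (0, 1/N]$ the strengthened convexity inequality $(1 - \tau N)E(v) + \tau \sum_k E(v + R_k^* w_k) \ge E(v + \tau\sum_k R_k^* w_k)$ holds for $E = F + G$ with $F$ convex Fréchet differentiable. Then for any $u, v \in \mathrm{dom}\, G$ and any $w_k \in V_k$ with $u - v = \tau \sum_{k=1}^N R_k^* w_k$: $\tau \sum_{k=1}^N \big(\omega\, d_k(w_k, v) + G_k(w_k, v)\big) + (1 - \tau N) G(v) \ge D_F(u,v) + G(u)$, provided $D_F(v + R_k^* w_k, v) \le \omega\, d_k(w_k, v)$ for each $k$. -/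

import Mathlib

open scoped BigOperators

lemma ereal_coe_sum {ι : Type*} (s : Finset ι) (f : ι → ℝ) :
    ((∑ i ∈ s, f i : ℝ) : EReal) = ∑ i ∈ s, ((f i : EReal)) := by
  induction s using Finset.cons_induction with
  | empty => simp
  | cons a s ha ih => simp [Finset.sum_cons, ih]

lemma ereal_coe_mul_add {r : ℝ} (hr : 0 ≤ r) (x y : EReal) :
    (r : EReal) * (x + y) = (r : EReal) * x + (r : EReal) * y := by
  rcases eq_or_lt_of_le hr with h0 | hr
  · simp [← h0]
  have hr' : (0 : EReal) < (r : EReal) := by exact_mod_cast hr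
  induction x using EReal.rec with
  | bot => simp [EReal.mul_bot_of_pos hr']
  | top =>
    induction y using EReal.rec with
    | bot => simp [EReal.mul_bot_of_pos hr', EReal.mul_top_of_pos hr']
    | coe z => simp [EReal.mul_top_of_pos hr', EReal.coe_add_top, ← EReal.coe_mul]
    | top => simp [EReal.mul_top_of_pos hr']
  | coe x =>
    induction y using EReal.rec with
    | bot => simp [EReal.mul_bot_of_pos hr', ← EReal.coe_mul]
    | coe z => norm_cast; ring
    | top => simp [EReal.mul_top_of_pos hr', ← EReal.coe_mul]

theorem stmt18 {V : Type*} [NormedAddCommGroup V] [NormedSpace ℝ V]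
    {N : ℕ} (hN : 0 < N)
    (Vk : Fin N → Type*) [∀ k, AddCommGroup (Vk k)] [∀ k, Module ℝ (Vk k)]
    (R : ∀ k, Vk k →ₗ[ℝ] V)
    (F : V → ℝ) (F' : V → V →L[ℝ] ℝ) (hF : ConvexOn ℝ Set.univ F)
    (hF' : ∀ x, HasFDerivAt F (F' x) x)
    (G : V → EReal)
    (hGconv : ∀ x y : V, ∀ t : ℝ, 0 ≤ t → t ≤ 1 →
      G (t • x + (1 - t) • y) ≤ (t : EReal) * G x + ((1 - t : ℝ) : EReal) * G y)
    (E : V → EReal) (hE : ∀ x, E x = (F x : EReal) + G x)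
    (d : ∀ k, Vk k → V → EReal) (Gk : ∀ k, Vk k → V → EReal)
    (ω : ℝ) (hω : 0 < ω)
    (hlocalF : ∀ x : V, G x < ⊤ → ∀ k (wk : Vk k),
      ((F (x + R k wk) - F x - F' x (R k wk) : ℝ) : EReal) ≤ (ω : EReal) * d k wk x)
    (hlocalG : ∀ x : V, G x < ⊤ → ∀ k (wk : Vk k),
      G (x + R k wk) ≤ Gk k wk x)
    (τ : ℝ) (hτ0 : 0 < τ) (hτ1 : τ ≤ 1 / (N : ℝ))
    (hsc : ∀ (x : V) (w : ∀ k, Vk k),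
      E (x + τ • ∑ k, R k (w k)) ≤
        ((1 - τ * N : ℝ) : EReal) * E x + (τ : EReal) * ∑ k, E (x + R k (w k)))
    (u v : V) (hu : G u < ⊤) (hv : G v < ⊤)
    (w : ∀ k, Vk k) (hw : u - v = τ • ∑ k, R k (w k)) :
    ((F u - F v - F' v (u - v) : ℝ) : EReal) + G u ≤
      (τ : EReal) * ∑ k, ((ω : EReal) * d k (w k) v + Gk k (w k) v) +
        ((1 - τ * N : ℝ) : EReal) * G v := by
  set A : EReal := ∑ k, ((ω : EReal) * d k (w k) v + Gk k (w k) v) with hA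
  have hτN : 0 ≤ 1 - τ * N := by
    have hN' : (0 : ℝ) < N := by exact_mod_cast hN
    have : τ * N ≤ (1 / N) * N := by
      exact mul_le_mul_of_nonneg_right hτ1 (le_of_lt hN')
    rw [one_div_mul_cancel (ne_of_gt hN')] at this
    linarith
  -- local bound on each E (v + R k (w k))
  have h1 : ∀ k : Fin N, E (v + R k (w k)) ≤
      ((F v + F' v (R k (w k)) : ℝ) : EReal) +
        ((ω : EReal) * d k (w k) v + Gk k (w k) v) := by
    intro k
    rw [hE]
    have hFk : ((F (v + R k (w k)) : ℝ) : EReal) =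
        ((F v + F' v (R k (w k)) : ℝ) : EReal) +
          ((F (v + R k (w k)) - F v - F' v (R k (w k)) : ℝ) : EReal) := by
      norm_cast; ring
    rw [hFk, add_assoc]
    exact add_le_add_right (add_le_add (hlocalF v hv k (w k)) (hlocalG v hv k (w k))) _
  -- sum the local bounds
  set S : ℝ := ∑ k, (F v + F' v (R k (w k))) with hS
  have hsum : ∑ k, E (v + R k (w k)) ≤ ((S : ℝ) : EReal) + A := by
    calc ∑ k, E (v + R k (w k))
        ≤ ∑ k, (((F v + F' v (R k (w k)) : ℝ) : EReal) +
            ((ω : EReal) * d k (w k) v + Gk k (w k) v)) :=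
          Finset.sum_le_sum fun k _ => h1 k
      _ = (∑ k, ((F v + F' v (R k (w k)) : ℝ) : EReal)) + A := Finset.sum_add_distrib
      _ = ((S : ℝ) : EReal) + A := by rw [hS, ereal_coe_sum]
  -- value of S
  have hSval : (1 - τ * N) * F v + τ * S = F v + F' v (u - v) := by
    have : S = N * F v + F' v (∑ k, R k (w k)) := by
      rw [hS, Finset.sum_add_distrib, Finset.sum_const, map_sum]
      simp [nsmul_eq_mul, Finset.card_univ]
    rw [this, hw, map_smul]
    simp only [smul_eq_mul]
    ring
  -- strengthened convexity
  have h2 : E u ≤ ((1 - τ * N : ℝ) : EReal) * E v + (τ : EReal) * (((S : ℝ) : EReal) + A) := by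
    have h := hsc v w
    have huv : v + τ • ∑ k, R k (w k) = u := by rw [← hw]; abel
    rw [huv] at h
    refine h.trans (add_le_add_right ?_ _)
    exact mul_le_mul_of_nonneg_left hsum (by exact_mod_cast le_of_lt hτ0)
  rw [hE u, hE v] at h2
  rw [ereal_coe_mul_add hτN, ereal_coe_mul_add (le_of_lt hτ0)] at h2
  have h3 : ((F u : ℝ) : EReal) + G u ≤
      ((F v + F' v (u - v) : ℝ) : EReal) + (((1 - τ * N : ℝ) : EReal) * G v + (τ : EReal) * A) := by
    refine h2.trans (le_of_eq ?_)
    have : ((1 - τ * N : ℝ) : EReal) * ((F v : ℝ) : EReal) + (τ : EReal) * ((S : ℝ) : EReal) =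
        ((F v + F' v (u - v) : ℝ) : EReal) := by
      rw [← EReal.coe_mul, ← EReal.coe_mul, ← EReal.coe_add, hSval]
    calc ((1 - τ * N : ℝ) : EReal) * ((F v : ℝ) : EReal) + ((1 - τ * N : ℝ) : EReal) * G v
          + ((τ : EReal) * ((S : ℝ) : EReal) + (τ : EReal) * A)
        = (((1 - τ * N : ℝ) : EReal) * ((F v : ℝ) : EReal) + (τ : EReal) * ((S : ℝ) : EReal))
          + (((1 - τ * N : ℝ) : EReal) * G v + (τ : EReal) * A) := by abel
      _ = ((F v + F' v (u - v) : ℝ) : EReal)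
          + (((1 - τ * N : ℝ) : EReal) * G v + (τ : EReal) * A) := by rw [this]
  -- subtract the real constant r := F v + F' v (u - v)
  set r : ℝ := F v + F' v (u - v) with hr
  have h4 : (((F u : ℝ) : EReal) + G u) + ((-r : ℝ) : EReal) ≤
      ((1 - τ * N : ℝ) : EReal) * G v + (τ : EReal) * A := by
    calc (((F u : ℝ) : EReal) + G u) + ((-r : ℝ) : EReal)
        ≤ (((r : ℝ) : EReal) + (((1 - τ * N : ℝ) : EReal) * G v + (τ : EReal) * A))
            + ((-r : ℝ) : EReal) := add_le_add_left h3 _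
      _ = (((1 - τ * N : ℝ) : EReal) * G v + (τ : EReal) * A)
            + (((r : ℝ) : EReal) + ((-r : ℝ) : EReal)) := by abel
      _ = ((1 - τ * N : ℝ) : EReal) * G v + (τ : EReal) * A := by
            rw [← EReal.coe_add]; simp
  have hLHS : ((F u - F v - F' v (u - v) : ℝ) : EReal) + G u =
      (((F u : ℝ) : EReal) + G u) + ((-r : ℝ) : EReal) := by
    have : (F u - F v - F' v (u - v) : ℝ) = F u + (-r) := by rw [hr]; ring
    rw [this, EReal.coe_add]
    abel
  rw [hLHS]
  exact h4.trans (le_of_eq (add_comm _ _))
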